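/- For n ≥ 1, N_{n/n-1}(σ(1+X_n)·σ^2(1+X_n)⋯σ^{2^{n-1}}(1+X_n)) = -1, where N_{n/n-1}(x) = x·σ^{2^{n-1}}(x) and σ generates Gal(B_n/Q). -/

import Mathlib

open Real Filter Finset

noncomputable def X (n : ℕ) : ℝ := 2 * Real.cos (Real.pi / 2 ^ (n + 1))

noncomputable def Qp : ℕ → Polynomial ℚ
  | 0 => Polynomial.X
  | (k + 1) => (Qp k).comp (Polynomial.X ^ 2 - Polynomial.C 2)

lemma Qp_monic (n : ℕ) : (Qp n).Monic := by
  induction n with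
  | zero => exact Polynomial.monic_X
  | succ k ih =>
      have h2 : (Polynomial.X ^ 2 - Polynomial.C (2:ℚ)).Monic := by
        apply Polynomial.monic_X_pow_sub_C; norm_num
      have hdeg : (Polynomial.X ^ 2 - Polynomial.C (2:ℚ)).natDegree = 2 := by
        simp [Polynomial.natDegree_X_pow_sub_C (n := 2) (r := (2:ℚ))]
      exact ih.comp h2 (by rw [hdeg]; norm_num)

lemma Qp_natDegree (n : ℕ) : (Qp n).natDegree = 2 ^ n := by
  induction n with
  | zero => simp [Qp]
  | succ k ih =>
      have hdeg : (Polynomial.X ^ 2 - Polynomial.C (2:ℚ)).natDegree = 2 := by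
        simp [Polynomial.natDegree_X_pow_sub_C (n := 2) (r := (2:ℚ))]
      rw [Qp, Polynomial.natDegree_comp, ih, hdeg, pow_succ]

lemma Qp_eval_neg_one (n : ℕ) : (Qp n).eval (-1) = -1 := by
  induction n with
  | zero => simp [Qp]
  | succ k ih =>
      rw [Qp, Polynomial.eval_comp]
      norm_num [ih]

lemma X_sq (k : ℕ) : X (k + 1) ^ 2 - 2 = X k := by
  have h : Real.pi / 2 ^ (k + 1) = 2 * (Real.pi / 2 ^ (k + 2)) := by
    rw [pow_succ]; ring
  rw [X, X, h, Real.cos_two_mul]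
  ring

lemma Qp_aeval (n : ℕ) : Polynomial.aeval (X n) (Qp n) = 0 := by
  induction n with
  | zero =>
      simp [Qp, X, Real.cos_pi_div_two]
  | succ k ih =>
      rw [Qp, Polynomial.aeval_comp]
      have : Polynomial.aeval (X (k+1)) (Polynomial.X ^ 2 - Polynomial.C (2:ℚ)) = X k := by
        simp [X_sq k]
      rw [this, ih]

set_option maxHeartbeats 1000000 in
theorem stmt19 (n : ℕ) (hn : 1 ≤ n)
    (K : IntermediateField ℚ ℝ) (hK : K = IntermediateField.adjoin ℚ ({X n} : Set ℝ))
    (σ : K ≃ₐ[ℚ] K) (hσ : orderOf σ = 2 ^ n)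
    (x : K) (hx : (x : ℝ) = X n) :
    ((∏ j ∈ Finset.Icc 1 (2 ^ (n - 1)), (σ ^ j) (1 + x)) *
      (σ ^ (2 ^ (n - 1))) (∏ j ∈ Finset.Icc 1 (2 ^ (n - 1)), (σ ^ j) (1 + x))) = -1 := by
  subst hK
  -- aeval of Qp n at x vanishes
  have hxa : Polynomial.aeval x (Qp n) = 0 := by
    have h1 := Polynomial.aeval_algHom_apply
      (IntermediateField.adjoin ℚ ({X n} : Set ℝ)).val x (Qp n)
    have h2 : (IntermediateField.adjoin ℚ ({X n} : Set ℝ)).val x = X n := hx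
    rw [h2, Qp_aeval] at h1
    exact Subtype.ext h1.symm
  have hint : IsIntegral ℚ x := ⟨Qp n, Qp_monic n, by rwa [← Polynomial.aeval_def]⟩
  have hdvd : minpoly ℚ x ∣ Qp n := minpoly.dvd ℚ x hxa
  -- injectivity of j ↦ σ^j x on range (2 ^ n)
  have hinj : ∀ a ∈ Finset.range (2 ^ n), ∀ b ∈ Finset.range (2 ^ n),
      (σ ^ a) x = (σ ^ b) x → a = b := by
    intro a ha b hb hab
    have hhom : (σ ^ a).toAlgHom = (σ ^ b).toAlgHom := by
      apply IntermediateField.adjoin_algHom_ext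
      intro y hy
      have hyx : (⟨y, IntermediateField.subset_adjoin ℚ _ hy⟩ :
          IntermediateField.adjoin ℚ ({X n} : Set ℝ)) = x := by
        apply Subtype.ext
        show y = (x : ℝ)
        rw [hx]
        exact hy
      rw [hyx]
      exact hab
    have hpow : σ ^ a = σ ^ b := by
      apply AlgEquiv.ext
      intro z
      have := DFunLike.congr_fun hhom z
      simpa using this
    exact pow_injOn_Iio_orderOf
      (show a ∈ Set.Iio (orderOf σ) by rw [hσ]; exact Finset.mem_range.1 ha)
      (show b ∈ Set.Iio (orderOf σ) by rw [hσ]; exact Finset.mem_range.1 hb) hpow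
  -- the roots
  set M := (minpoly ℚ x).map
    (algebraMap ℚ (IntermediateField.adjoin ℚ ({X n} : Set ℝ))) with hMdef
  have hMne : M ≠ 0 := Polynomial.map_ne_zero (minpoly.ne_zero hint)
  have hroot : ∀ j : ℕ, (σ ^ j) x ∈ M.roots := by
    intro j
    rw [Polynomial.mem_roots hMne, Polynomial.IsRoot, hMdef, Polynomial.eval_map_algebraMap]
    have h3 : Polynomial.aeval ((σ ^ j) x) (minpoly ℚ x)
        = (σ ^ j) (Polynomial.aeval x (minpoly ℚ x)) :=
      Polynomial.aeval_algHom_apply (σ ^ j) x (minpoly ℚ x)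
    rw [h3, minpoly.aeval, map_zero]
  set t := Finset.image (fun j => (σ ^ j) x) (Finset.range (2 ^ n)) with htdef
  have htcard : t.card = 2 ^ n := by
    rw [htdef, Finset.card_image_of_injOn hinj, Finset.card_range]
  have hle : t.val ≤ M.roots := by
    rw [Multiset.le_iff_subset t.nodup]
    intro r hr
    obtain ⟨j, _, rfl⟩ := Finset.mem_image.1 (Finset.mem_def.2 hr)
    exact hroot j
  have hNled : 2 ^ n ≤ (minpoly ℚ x).natDegree := by
    calc 2 ^ n = t.card := htcard.symm
      _ ≤ Multiset.card M.roots := Multiset.card_le_card hle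
      _ ≤ M.natDegree := Polynomial.card_roots' M
      _ = (minpoly ℚ x).natDegree := Polynomial.natDegree_map _
  have hminQp : Qp n = minpoly ℚ x :=
    Polynomial.eq_of_monic_of_dvd_of_natDegree_le (minpoly.monic hint) (Qp_monic n) hdvd
      (by rw [Qp_natDegree]; exact hNled)
  have hMdeg : M.natDegree = 2 ^ n := by
    rw [hMdef, Polynomial.natDegree_map, ← hminQp, Qp_natDegree]
  have hroots : M.roots = t.val := by
    refine (Multiset.eq_of_le_of_card_le hle ?_).symm
    calc Multiset.card M.roots ≤ M.natDegree := Polynomial.card_roots' M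
      _ = t.card := by rw [hMdeg, htcard]
  have hsplits : M.Splits := by
    rw [Polynomial.splits_iff_card_roots, hroots, hMdeg]
    exact htcard
  have hMmonic : M.Monic := (minpoly.monic hint).map _
  have hfact := hsplits.eq_prod_roots_of_monic hMmonic
  -- evaluate M at -1 two ways
  have heval1 : M.eval (-1) = -1 := by
    rw [hMdef, ← hminQp]
    have hneg : (-1 : IntermediateField.adjoin ℚ ({X n} : Set ℝ))
        = algebraMap ℚ _ (-1) := by simp
    rw [Polynomial.eval_map, hneg, Polynomial.eval₂_at_apply, Qp_eval_neg_one]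
  have heval2 : M.eval (-1) = ∏ r ∈ t, (-1 - r) := by
    conv_lhs => rw [hfact, hroots]
    rw [Polynomial.eval_multiset_prod, Multiset.map_map, Finset.prod]
    congr 1
    apply Multiset.map_congr rfl
    intro r _
    simp
  have heval3 : ∏ r ∈ t, (-1 - r) = ∏ j ∈ Finset.range (2 ^ n), (-1 - (σ ^ j) x) := by
    rw [htdef]
    exact Finset.prod_image hinj
  -- key: product over the full group is -1
  have hkey : ∏ j ∈ Finset.range (2 ^ n), (σ ^ j) (1 + x) = -1 := by
    have hNeven : Even (2 ^ n) := by
      rw [Nat.even_pow]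
      exact ⟨even_two, by omega⟩
    have h2 : ∏ j ∈ Finset.range (2 ^ n), (-1 - (σ ^ j) x)
        = ∏ j ∈ Finset.range (2 ^ n), (σ ^ j) (1 + x) := by
      calc ∏ j ∈ Finset.range (2 ^ n), (-1 - (σ ^ j) x)
          = ∏ j ∈ Finset.range (2 ^ n), (-1) * ((σ ^ j) (1 + x)) := by
            apply Finset.prod_congr rfl
            intro j _
            rw [map_add, map_one]
            ring
        _ = (-1) ^ (Finset.range (2 ^ n)).card
              * ∏ j ∈ Finset.range (2 ^ n), (σ ^ j) (1 + x) := by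
            rw [← Finset.prod_const, ← Finset.prod_mul_distrib]
        _ = ∏ j ∈ Finset.range (2 ^ n), (σ ^ j) (1 + x) := by
            rw [Finset.card_range, hNeven.neg_one_pow, one_mul]
    rw [← h2, ← heval3, ← heval2, heval1]
  -- now massage the goal
  have hNm : 2 ^ n = 2 ^ (n - 1) + 2 ^ (n - 1) := by
    rw [← two_mul, ← pow_succ']
    congr 1
    omega
  have hσprod : (σ ^ 2 ^ (n - 1)) (∏ j ∈ Finset.Icc 1 (2 ^ (n - 1)), (σ ^ j) (1 + x))
      = ∏ j ∈ Finset.Icc (2 ^ (n - 1) + 1) (2 ^ (n - 1) + 2 ^ (n - 1)), (σ ^ j) (1 + x) := by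
    rw [map_prod]
    rw [show Finset.Icc (2 ^ (n - 1) + 1) (2 ^ (n - 1) + 2 ^ (n - 1))
        = (Finset.Icc 1 (2 ^ (n - 1))).map (addLeftEmbedding (2 ^ (n - 1))) by
      rw [Finset.map_add_left_Icc]]
    rw [Finset.prod_map]
    apply Finset.prod_congr rfl
    intro j _
    show (σ ^ 2 ^ (n - 1)) ((σ ^ j) (1 + x)) = (σ ^ (2 ^ (n - 1) + j)) (1 + x)
    rw [pow_add, AlgEquiv.mul_apply]
  rw [hσprod]
  have hcomb : (∏ j ∈ Finset.Icc 1 (2 ^ (n - 1)), (σ ^ j) (1 + x)) *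
        ∏ j ∈ Finset.Icc (2 ^ (n - 1) + 1) (2 ^ (n - 1) + 2 ^ (n - 1)), (σ ^ j) (1 + x)
      = ∏ j ∈ Finset.Icc 1 (2 ^ (n - 1) + 2 ^ (n - 1)), (σ ^ j) (1 + x) := by
    rw [show (1 : ℕ) = 0 + 1 from rfl, Finset.Icc_add_one_left_eq_Ioc, Finset.Icc_add_one_left_eq_Ioc, zero_add,
      Finset.Icc_add_one_left_eq_Ioc]
    exact Finset.prod_Ioc_consecutive _ (Nat.zero_le _) (Nat.le_add_right _ _)
  rw [hcomb]
  have hshift : ∏ j ∈ Finset.Icc 1 (2 ^ (n - 1) + 2 ^ (n - 1)), (σ ^ j) (1 + x)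
      = σ (∏ j ∈ Finset.range (2 ^ (n - 1) + 2 ^ (n - 1)), (σ ^ j) (1 + x)) := by
    rw [map_prod]
    rw [show Finset.Icc 1 (2 ^ (n - 1) + 2 ^ (n - 1))
        = (Finset.range (2 ^ (n - 1) + 2 ^ (n - 1))).map (addLeftEmbedding 1) by
      rw [Finset.range_eq_Ico, Finset.map_add_left_Ico, ← Finset.Ico_add_one_right_eq_Icc]
      congr 1
      omega]
    rw [Finset.prod_map]
    apply Finset.prod_congr rfl
    intro j _
    show (σ ^ (1 + j)) (1 + x) = σ ((σ ^ j) (1 + x))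
    rw [pow_add, pow_one, AlgEquiv.mul_apply]
  rw [hshift, ← hNm, hkey]
  simp
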